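/- Let A ≠ 1, B ≠ 0, and let (x_n) satisfy x_{n+10} = x_n/(A + B·x_n·x_{n+2}·x_{n+4}·x_{n+6}·x_{n+8}) with all terms and denominators nonzero. If x_i·x_{i+2}·x_{i+4}·x_{i+6}·x_{i+8} = (1−A)/B for i = 0 and i = 1, then x_{n+10} = x_n for all n, i.e., the solution is periodic with period 10. -/

import Mathlib

theorem stmt8 (A B : ℝ) (hA : A ≠ 1) (hB : B ≠ 0) (x : ℕ → ℝ)
    (hx : ∀ n, x n ≠ 0)
    (hden : ∀ n, A + B * (x n * x (n+2) * x (n+4) * x (n+6) * x (n+8)) ≠ 0)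
    (hrec : ∀ n, x (n + 10) =
      x n / (A + B * (x n * x (n+2) * x (n+4) * x (n+6) * x (n+8))))
    (h0 : x 0 * x 2 * x 4 * x 6 * x 8 = (1 - A) / B)
    (h1 : x 1 * x 3 * x 5 * x 7 * x 9 = (1 - A) / B) :
    ∀ n, x (n + 10) = x n := by
  have key : ∀ n, x n * x (n+2) * x (n+4) * x (n+6) * x (n+8) = (1-A)/B := by
    intro n
    induction n using Nat.strong_induction_on with
    | _ n ih =>
      match n with
      | 0 => exact h0
      | 1 => exact h1
      | (m+2) =>
        have hm := ih m (by omega)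
        have hone : A + B * (x m * x (m+2) * x (m+4) * x (m+6) * x (m+8)) = 1 := by
          rw [hm]; field_simp; ring
        have hx10 : x (m+10) = x m := by rw [hrec m, hone, div_one]
        have e1 : m + 2 + 2 = m + 4 := by ring
        have e2 : m + 2 + 4 = m + 6 := by ring
        have e3 : m + 2 + 6 = m + 8 := by ring
        have e4 : m + 2 + 8 = m + 10 := by ring
        rw [e1, e2, e3, e4, hx10, ← hm]; ring
  intro n
  have hone : A + B * (x n * x (n+2) * x (n+4) * x (n+6) * x (n+8)) = 1 := by
    rw [key n]; field_simp; ring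
  rw [hrec n, hone, div_one]
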